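/- Let Δ_V : T(V) → T(V) ⊗ T(V) be a natural transformation (in V) such that T(V) with the usual tensor-product multiplication and comultiplication Δ_V is a quasi-Hopf algebra (i.e., Δ_V is a counital coalgebra structure making the multiplication a coalgebra map) for every module V over a field k. Then Δ_V equals the canonical comultiplication ψ_V determined by making V primitive. -/

import Mathlib

open TensorProduct

/-- The canonical comultiplication `ψ` on `T(V)` making `V` primitive. -/
noncomputable def psi (k V : Type) [Field k] [AddCommGroup V] [Module k V] :
    TensorAlgebra k V →ₐ[k] TensorAlgebra k V ⊗[k] TensorAlgebra k V :=
  TensorAlgebra.lift k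
    ((Algebra.TensorProduct.includeLeft :
        TensorAlgebra k V →ₐ[k] TensorAlgebra k V ⊗[k] TensorAlgebra k V).toLinearMap.comp
        (TensorAlgebra.ι k) +
      (Algebra.TensorProduct.includeRight :
        TensorAlgebra k V →ₐ[k] TensorAlgebra k V ⊗[k] TensorAlgebra k V).toLinearMap.comp
        (TensorAlgebra.ι k))

/-- The functorial map `T(f) : T(V) → T(W)` induced by a linear map `f : V → W`. -/
noncomputable def Tmap (k : Type) [Field k] {V W : Type} [AddCommGroup V] [Module k V]
    [AddCommGroup W] [Module k W] (f : V →ₗ[k] W) :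
    TensorAlgebra k V →ₐ[k] TensorAlgebra k W :=
  TensorAlgebra.lift k ((TensorAlgebra.ι k).comp f)

section Aux

variable (k : Type) [Field k] {V W U : Type} [AddCommGroup V] [Module k V]
  [AddCommGroup W] [Module k W] [AddCommGroup U] [Module k U]

theorem Tmap_ι (f : V →ₗ[k] W) (v : V) :
    Tmap k f (TensorAlgebra.ι k v) = TensorAlgebra.ι k (f v) := by
  simp [Tmap]

theorem Tmap_comp (f : W →ₗ[k] U) (g : V →ₗ[k] W) :
    Tmap k (f.comp g) = (Tmap k f).comp (Tmap k g) := by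
  apply TensorAlgebra.hom_ext
  ext v
  simp [Tmap_ι]

theorem Tmap_id : Tmap k (LinearMap.id : V →ₗ[k] V) = AlgHom.id k _ := by
  apply TensorAlgebra.hom_ext
  ext v
  simp [Tmap_ι]

end Aux

section Key

variable (k : Type) [Field k]

local notation "A" => TensorAlgebra k k

set_option maxHeartbeats 1600000 in
set_option synthInstance.maxHeartbeats 400000 in
/-- The main computation: on `T(k)` the comultiplication is determined. -/
theorem key
    (Δ : ∀ (V : Type) [AddCommGroup V] [Module k V],
        TensorAlgebra k V →ₐ[k] TensorAlgebra k V ⊗[k] TensorAlgebra k V)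
    (ε : A →ₐ[k] k)
    (hnat : ∀ (f : k →ₗ[k] k × k),
        (Δ (k × k)).comp (Tmap k f) =
          (Algebra.TensorProduct.map (Tmap k f) (Tmap k f)).comp (Δ k))
    (hl : (TensorProduct.lid k A).toLinearMap.comp
          ((LinearMap.rTensor A ε.toLinearMap).comp (Δ k).toLinearMap) = LinearMap.id)
    (hr : (TensorProduct.rid k A).toLinearMap.comp
          ((LinearMap.lTensor A ε.toLinearMap).comp (Δ k).toLinearMap) = LinearMap.id) :
    Δ k (TensorAlgebra.ι k (1 : k)) =
      TensorAlgebra.ι k (1 : k) ⊗ₜ[k] 1 + 1 ⊗ₜ[k] TensorAlgebra.ι k (1 : k) := by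
  set X : A := TensorAlgebra.ι k (1 : k) with hXdef
  set u : A ⊗[k] A := Δ k X with hudef
  set π : A →ₐ[k] A := Tmap k (0 : k →ₗ[k] k) with hπdef
  have hπX : π X = 0 := by
    rw [hπdef, hXdef, Tmap_ι]; simp
  -- Step A : u = (id ⊗ π) u + (π ⊗ id) u
  set d : k →ₗ[k] k × k := LinearMap.prod LinearMap.id LinearMap.id with hd
  set g₁ : k →ₗ[k] k × k := LinearMap.inl k k k with hg1
  set g₂ : k →ₗ[k] k × k := LinearMap.inr k k k with hg2
  set p₁ : k × k →ₗ[k] k := LinearMap.fst k k k with hp1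
  set p₂ : k × k →ₗ[k] k := LinearMap.snd k k k with hp2
  have hΦ : ∀ (f : k →ₗ[k] k × k) (w : A ⊗[k] (TensorAlgebra k k)),
      (Algebra.TensorProduct.map (Tmap k p₁) (Tmap k p₂))
        (Algebra.TensorProduct.map (Tmap k f) (Tmap k f) w)
      = Algebra.TensorProduct.map (Tmap k (p₁.comp f)) (Tmap k (p₂.comp f)) w := by
    intro f w
    rw [Tmap_comp, Tmap_comp, Algebra.TensorProduct.map_comp, AlgHom.comp_apply]
  have hnat' : ∀ (f : k →ₗ[k] k × k),
      Δ (k × k) (Tmap k f X) = Algebra.TensorProduct.map (Tmap k f) (Tmap k f) u := by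
    intro f
    have := DFunLike.congr_fun (hnat f) X
    simpa using this
  have hsum : Tmap k d X = Tmap k g₁ X + Tmap k g₂ X := by
    rw [hXdef, Tmap_ι, Tmap_ι, Tmap_ι, ← map_add]
    congr 1
    simp [hd, hg1, hg2, Prod.ext_iff]
  have star : u = Algebra.TensorProduct.map (AlgHom.id k A) π u
      + Algebra.TensorProduct.map π (AlgHom.id k A) u := by
    have e3 : Algebra.TensorProduct.map (Tmap k (p₁.comp d)) (Tmap k (p₂.comp d)) u
        = Algebra.TensorProduct.map (Tmap k (p₁.comp g₁)) (Tmap k (p₂.comp g₁)) u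
          + Algebra.TensorProduct.map (Tmap k (p₁.comp g₂)) (Tmap k (p₂.comp g₂)) u := by
      rw [← hΦ d u, ← hΦ g₁ u, ← hΦ g₂ u, ← hnat' g₁, ← hnat' g₂, ← map_add, ← map_add,
        ← hsum, hnat' d]
    have e2 := e3
    have c1 : p₁.comp d = LinearMap.id := rfl
    have c2 : p₂.comp d = LinearMap.id := rfl
    have c3 : p₁.comp g₁ = LinearMap.id := rfl
    have c4 : p₂.comp g₁ = 0 := rfl
    have c5 : p₁.comp g₂ = 0 := rfl
    have c6 : p₂.comp g₂ = LinearMap.id := rfl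
    rw [c1, c2, c3, c4, c5, c6, Tmap_id, Algebra.TensorProduct.map_id] at e2
    simp only [AlgHom.coe_id, id_eq] at e2
    exact e2
  -- the counit functionals
  set L : A ⊗[k] A →ₗ[k] A :=
    (TensorProduct.lid k A).toLinearMap.comp (LinearMap.rTensor A ε.toLinearMap) with hL
  set R : A ⊗[k] A →ₗ[k] A :=
    (TensorProduct.rid k A).toLinearMap.comp (LinearMap.lTensor A ε.toLinearMap) with hR
  have hLu : L u = X := by
    have := DFunLike.congr_fun hl X
    simpa [hL] using this
  have hRu : R u = X := by
    have := DFunLike.congr_fun hr X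
    simpa [hR] using this
  -- π factors through the scalars via ε₀ := ε ∘ π
  set ε₀ : A →ₐ[k] k := ε.comp π with hε₀
  have hπfact : ∀ x : A, π x = algebraMap k A (ε₀ x) := by
    have hfac : π = (Algebra.ofId k A).comp ε₀ := by
      apply TensorAlgebra.hom_ext
      apply LinearMap.ext; intro c
      simp only [LinearMap.coe_comp, Function.comp_apply, AlgHom.toLinearMap_apply,
        AlgHom.coe_comp, hε₀]
      have h0 : π (TensorAlgebra.ι k c) = 0 := by rw [hπdef, Tmap_ι]; simp
      rw [h0, map_zero, map_zero]
    intro x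
    rw [hfac]
    rfl
  -- (F1) L ∘ (id ⊗ π) = π ∘ L
  have F1 : ∀ w : A ⊗[k] A,
      L (Algebra.TensorProduct.map (AlgHom.id k A) π w) = π (L w) := by
    intro w
    induction w using TensorProduct.induction_on with
    | zero => simp
    | tmul x y =>
        simp only [hL, Algebra.TensorProduct.map_tmul, AlgHom.coe_id, id_eq,
          LinearMap.coe_comp, Function.comp_apply, LinearMap.rTensor_tmul,
          AlgHom.toLinearMap_apply, LinearEquiv.coe_coe, TensorProduct.lid_tmul, map_smul]
    | add x y hx hy => simp only [map_add, hx, hy]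
  -- (F2) R ∘ (π ⊗ id) = π ∘ R
  have F2 : ∀ w : A ⊗[k] A,
      R (Algebra.TensorProduct.map π (AlgHom.id k A) w) = π (R w) := by
    intro w
    induction w using TensorProduct.induction_on with
    | zero => simp
    | tmul x y =>
        simp only [hR, Algebra.TensorProduct.map_tmul, AlgHom.coe_id, id_eq,
          LinearMap.coe_comp, Function.comp_apply, LinearMap.lTensor_tmul,
          AlgHom.toLinearMap_apply, LinearEquiv.coe_coe, TensorProduct.rid_tmul, map_smul]
    | add x y hx hy => simp only [map_add, hx, hy]
  -- (F3) (π ⊗ id) w = 1 ⊗ L((π ⊗ id) w)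
  have F3 : ∀ w : A ⊗[k] A,
      Algebra.TensorProduct.map π (AlgHom.id k A) w
        = 1 ⊗ₜ[k] L (Algebra.TensorProduct.map π (AlgHom.id k A) w) := by
    intro w
    induction w using TensorProduct.induction_on with
    | zero => simp
    | tmul x y =>
        rw [Algebra.TensorProduct.map_tmul]
        simp only [AlgHom.coe_id, id_eq]
        rw [hπfact x]
        simp only [hL, LinearMap.coe_comp, Function.comp_apply, LinearMap.rTensor_tmul,
          AlgHom.toLinearMap_apply, LinearEquiv.coe_coe]
        rw [AlgHom.commutes, TensorProduct.lid_tmul, Algebra.algebraMap_eq_smul_one,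
          TensorProduct.smul_tmul]
        simp
    | add x y hx hy =>
        rw [map_add, map_add, hx, hy, ← TensorProduct.tmul_add]
        rw [← hx, ← hy, ← map_add]
  -- (F4) (id ⊗ π) w = R((id ⊗ π) w) ⊗ 1
  have F4 : ∀ w : A ⊗[k] A,
      Algebra.TensorProduct.map (AlgHom.id k A) π w
        = R (Algebra.TensorProduct.map (AlgHom.id k A) π w) ⊗ₜ[k] 1 := by
    intro w
    induction w using TensorProduct.induction_on with
    | zero => simp
    | tmul x y =>
        rw [Algebra.TensorProduct.map_tmul]
        simp only [AlgHom.coe_id, id_eq]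
        rw [hπfact y]
        simp only [hR, LinearMap.coe_comp, Function.comp_apply, LinearMap.lTensor_tmul,
          AlgHom.toLinearMap_apply, LinearEquiv.coe_coe]
        rw [AlgHom.commutes, TensorProduct.rid_tmul, Algebra.algebraMap_eq_smul_one,
          ← TensorProduct.smul_tmul]
        simp
    | add x y hx hy =>
        rw [map_add, map_add, hx, hy, ← TensorProduct.add_tmul]
        rw [← hx, ← hy, ← map_add]
  -- put it together
  set p : A ⊗[k] A := Algebra.TensorProduct.map (AlgHom.id k A) π u with hp
  set q : A ⊗[k] A := Algebra.TensorProduct.map π (AlgHom.id k A) u with hq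
  have hLq : L q = X := by
    have h1 : L u = L p + L q := by rw [star, map_add]
    rw [hLu, hp, F1 u, hLu, hπX, zero_add] at h1
    exact h1.symm
  have hRp : R p = X := by
    have h1 : R u = R p + R q := by rw [star, map_add]
    rw [hRu, hq, F2 u, hRu, hπX, add_zero] at h1
    exact h1.symm
  have hqX : q = 1 ⊗ₜ[k] X := by rw [hq, F3 u, ← hq, hLq]
  have hpX : p = X ⊗ₜ[k] 1 := by rw [hp, F4 u, ← hp, hRp]
  rw [star, hpX, hqX]

end Key

/-- If `Δ` is a natural comultiplication on `T(V)` which together with the usual multiplication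
makes `T(V)` a (coassociative, counital) quasi-Hopf algebra for every `V`, then `Δ = ψ`. -/
theorem stmt2 (k : Type) [Field k]
    (Δ : ∀ (V : Type) [AddCommGroup V] [Module k V],
        TensorAlgebra k V →ₐ[k] TensorAlgebra k V ⊗[k] TensorAlgebra k V)
    (ε : ∀ (V : Type) [AddCommGroup V] [Module k V], TensorAlgebra k V →ₐ[k] k)
    -- naturality of Δ
    (hnat : ∀ (V W : Type) [AddCommGroup V] [Module k V] [AddCommGroup W] [Module k W]
        (f : V →ₗ[k] W),
        (Δ W).comp (Tmap k f) = (Algebra.TensorProduct.map (Tmap k f) (Tmap k f)).comp (Δ V))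
    -- coassociativity
    (hcoassoc : ∀ (V : Type) [AddCommGroup V] [Module k V],
        (Algebra.TensorProduct.assoc k k k (TensorAlgebra k V) (TensorAlgebra k V)
            (TensorAlgebra k V)).toAlgHom.comp
          ((Algebra.TensorProduct.map (Δ V) (AlgHom.id k (TensorAlgebra k V))).comp (Δ V))
        = (Algebra.TensorProduct.map (AlgHom.id k (TensorAlgebra k V)) (Δ V)).comp (Δ V))
    -- counit axioms
    (hcounitl : ∀ (V : Type) [AddCommGroup V] [Module k V],
        (TensorProduct.lid k (TensorAlgebra k V)).toLinearMap.comp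
          ((LinearMap.rTensor (TensorAlgebra k V) (ε V).toLinearMap).comp (Δ V).toLinearMap)
        = LinearMap.id)
    (hcounitr : ∀ (V : Type) [AddCommGroup V] [Module k V],
        (TensorProduct.rid k (TensorAlgebra k V)).toLinearMap.comp
          ((LinearMap.lTensor (TensorAlgebra k V) (ε V).toLinearMap).comp (Δ V).toLinearMap)
        = LinearMap.id) :
    ∀ (V : Type) [AddCommGroup V] [Module k V], Δ V = psi k V := by
  intro V _ _
  have hk := key k Δ (ε k) (fun f => hnat k (k × k) f) (hcounitl k) (hcounitr k)
  apply TensorAlgebra.hom_ext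
  ext v
  show Δ V (TensorAlgebra.ι k v) = psi k V (TensorAlgebra.ι k v)
  have hf := DFunLike.congr_fun (hnat k V (LinearMap.toSpanSingleton k V v))
      (TensorAlgebra.ι k (1 : k))
  simp only [AlgHom.coe_comp, Function.comp_apply] at hf
  have hTX : Tmap k (LinearMap.toSpanSingleton k V v) (TensorAlgebra.ι k (1 : k))
      = TensorAlgebra.ι k v := by
    rw [Tmap_ι]
    simp
  rw [hTX] at hf
  rw [hf, hk]
  rw [map_add, Algebra.TensorProduct.map_tmul, Algebra.TensorProduct.map_tmul, hTX]
  simp [psi, TensorAlgebra.lift_ι_apply]
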